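/- Let X be a topological space, I a compact real interval, and f : X × I → ℝ a function that is lower semicontinuous in the first variable, quasi-concave and upper semicontinuous in the second variable, and such that {λ ∈ I : f(·, λ) is inf-connected on X} is dense in I. Then sup_{λ ∈ I} inf_{x ∈ X} f(x, λ) = inf_{x ∈ X} sup_{λ ∈ I} f(x, λ). -/
import Mathlib


open Set

/-- Theorem 2.A ([10], Theorem 5.7): a topological minimax theorem. -/
theorem stmt13 {X : Type*} [TopologicalSpace X] (a b : ℝ) (hab : a ≤ b)
    (f : X → ℝ → ℝ)
    (hlsc : ∀ lam ∈ Icc a b, LowerSemicontinuous (fun x => f x lam))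
    (hqc : ∀ x, QuasiconcaveOn ℝ (Icc a b) (f x))
    (husc : ∀ x, UpperSemicontinuousOn (f x) (Icc a b))
    (hdense : Icc a b ⊆
        closure {lam ∈ Icc a b | ∀ r : ℝ, IsPreconnected {x : X | f x lam < r}}) :
    (⨆ lam : Icc a b, ⨅ x : X, (f x lam : EReal)) =
      ⨅ x : X, ⨆ lam : Icc a b, (f x lam : EReal) := by
  refine le_antisymm (iSup_iInf_le_iInf_iSup _) ?_
  by_contra hcon
  push_neg at hcon
  obtain ⟨r, hr1, hr2⟩ := EReal.exists_between_coe_real hcon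
  have hIne : (Icc a b).Nonempty := nonempty_Icc.2 hab
  -- Step 1: each x has some lam with f x lam > r
  have h1 : ∀ x : X, ∃ lam ∈ Icc a b, r < f x lam := by
    intro x
    have hx : (r : EReal) < ⨆ lam : Icc a b, (f x lam : EReal) :=
      lt_of_lt_of_le hr2 (iInf_le _ x)
    rw [lt_iSup_iff] at hx
    obtain ⟨lam, hlam⟩ := hx
    exact ⟨lam, lam.2, by exact_mod_cast hlam⟩
  set Λ : X → Set ℝ := fun x => {lam ∈ Icc a b | r ≤ f x lam} with hΛdef
  have hsub : ∀ x, Λ x ⊆ Icc a b := fun x lam h => h.1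
  have hconv : ∀ x, Convex ℝ (Λ x) := fun x => hqc x r
  have hclosed : ∀ x, IsClosed (Λ x) := by
    intro x
    rw [← closure_subset_iff_isClosed]
    intro lam hlam
    have hlamI : lam ∈ Icc a b :=
      isClosed_Icc.closure_subset ((closure_mono (hsub x)) hlam)
    refine ⟨hlamI, ?_⟩
    by_contra hfr
    push_neg at hfr
    have hev : ∀ᶠ l in nhdsWithin lam (Icc a b), f x l < r := husc x lam hlamI r hfr
    have hev' : ∀ᶠ l in nhdsWithin lam (Λ x), f x l < r :=
      hev.filter_mono (nhdsWithin_mono _ (hsub x))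
    have hnb : (nhdsWithin lam (Λ x)).NeBot := mem_closure_iff_nhdsWithin_neBot.1 hlam
    obtain ⟨l, hfl, hlmem⟩ := (hev'.and eventually_mem_nhdsWithin).exists
    exact absurd hlmem.2 (not_le.2 hfl)
  have hcomp : ∀ x, IsCompact (Λ x) := fun x =>
    isCompact_Icc.of_isClosed_subset (hclosed x) (hsub x)
  have hne : ∀ x, (Λ x).Nonempty := by
    intro x
    obtain ⟨lam, hl, hf⟩ := h1 x
    exact ⟨lam, hl, hf.le⟩
  -- key disconnection argument
  have key : ∀ x1 x2 lam1 lam2, lam1 ∈ Icc a b → lam2 ∈ Icc a b →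
      r < f x1 lam1 → r < f x2 lam2 → lam1 < lam2 →
      (∀ lam, ¬(lam ∈ Λ x1 ∧ lam ∈ Λ x2)) → False := by
    intro x1 x2 lam1 lam2 h1I h2I hf1 hf2 hlt hdisj
    have hm1 : lam1 ∈ Λ x1 := ⟨h1I, hf1.le⟩
    have hm2 : lam2 ∈ Λ x2 := ⟨h2I, hf2.le⟩
    set K1 := Λ x1 ∩ Icc lam1 lam2 with hK1def
    set K2 := Λ x2 ∩ Icc lam1 lam2 with hK2def
    have hK1c : IsCompact K1 := (hcomp x1).inter_right isClosed_Icc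
    have hK2c : IsCompact K2 := (hcomp x2).inter_right isClosed_Icc
    have hK1ne : K1.Nonempty := ⟨lam1, hm1, left_mem_Icc.2 hlt.le⟩
    have hK2ne : K2.Nonempty := ⟨lam2, hm2, right_mem_Icc.2 hlt.le⟩
    set c := sSup K1 with hcdef
    set d := sInf K2 with hddef
    have hcK : c ∈ K1 := hK1c.sSup_mem hK1ne
    have hdK : d ∈ K2 := hK2c.sInf_mem hK2ne
    have hcd : c < d := by
      by_contra hge
      push_neg at hge
      have hcΛ2 : c ∈ Λ x2 :=
        ((hconv x2).ordConnected).out hdK.1 hm2 ⟨hge, hcK.2.2⟩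
      exact hdisj c ⟨hcK.1, hcΛ2⟩
    have hl1c : lam1 ≤ c := le_csSup hK1c.bddAbove ⟨hm1, left_mem_Icc.2 hlt.le⟩
    have hdl2 : d ≤ lam2 := hdK.2.2
    have hIoo : ∀ μ ∈ Ioo c d, μ ∈ Icc a b ∧ f x1 μ < r ∧ f x2 μ < r := by
      intro μ hμ
      have hμI : μ ∈ Icc a b :=
        ⟨(hcK.1.1.1).trans hμ.1.le, hμ.2.le.trans (hdK.1.1.2)⟩
      refine ⟨hμI, ?_, ?_⟩
      · by_contra hge
        push_neg at hge
        have : μ ∈ K1 := ⟨⟨hμI, hge⟩, hl1c.trans hμ.1.le, hμ.2.le.trans hdl2⟩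
        exact absurd (le_csSup hK1c.bddAbove this) (not_le.2 hμ.1)
      · by_contra hge
        push_neg at hge
        have : μ ∈ K2 := ⟨⟨hμI, hge⟩, hl1c.trans hμ.1.le, hμ.2.le.trans hdl2⟩
        exact absurd (csInf_le hK2c.bddBelow this) (not_le.2 hμ.2)
    have hmid : (c + d) / 2 ∈ Ioo c d := ⟨by linarith, by linarith⟩
    have hmidcl := hdense (hIoo _ hmid).1
    rw [mem_closure_iff] at hmidcl
    obtain ⟨mu0, hmu0Ioo, hmu0I, hconn⟩ := hmidcl (Ioo c d) isOpen_Ioo hmid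
    obtain ⟨hmu0mem, hfx1, hfx2⟩ := hIoo mu0 hmu0Ioo
    set U : Set X := ⋃ lam ∈ {l | l ∈ Icc a b ∧ l < mu0}, {x | r < f x lam} with hUdef
    set V : Set X := ⋃ lam ∈ {l | l ∈ Icc a b ∧ mu0 < l}, {x | r < f x lam} with hVdef
    have hUopen : IsOpen U := isOpen_biUnion fun lam hl =>
      lowerSemicontinuous_iff_isOpen_preimage.1 (hlsc lam hl.1) r
    have hVopen : IsOpen V := isOpen_biUnion fun lam hl =>
      lowerSemicontinuous_iff_isOpen_preimage.1 (hlsc lam hl.1) r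
    have hcover : {x : X | f x mu0 < r} ⊆ U ∪ V := by
      intro x hx
      obtain ⟨lam, hlI, hfl⟩ := h1 x
      rcases lt_trichotomy lam mu0 with h | h | h
      · exact Or.inl (mem_biUnion ⟨hlI, h⟩ hfl)
      · exact absurd (h ▸ hfl) (not_lt.2 (le_of_lt hx))
      · exact Or.inr (mem_biUnion ⟨hlI, h⟩ hfl)
    have hx1mem : x1 ∈ {x : X | f x mu0 < r} ∩ U :=
      ⟨hfx1, mem_biUnion ⟨h1I, lt_of_le_of_lt hl1c hmu0Ioo.1⟩ hf1⟩
    have hx2mem : x2 ∈ {x : X | f x mu0 < r} ∩ V :=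
      ⟨hfx2, mem_biUnion ⟨h2I, lt_of_lt_of_le hmu0Ioo.2 hdl2⟩ hf2⟩
    obtain ⟨x, hxs, hxU, hxV⟩ :=
      hconn r U V hUopen hVopen hcover ⟨x1, hx1mem⟩ ⟨x2, hx2mem⟩
    simp only [hUdef, hVdef, mem_iUnion, mem_setOf_eq] at hxU hxV
    obtain ⟨la, ⟨hlaI, hla⟩, hfa⟩ := hxU
    obtain ⟨lb, ⟨hlbI, hlb⟩, hfb⟩ := hxV
    have hmin : min (f x la) (f x lb) ≤ f x mu0 := by
      have hmem : mu0 ∈ {lam ∈ Icc a b | min (f x la) (f x lb) ≤ f x lam} :=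
        ((hqc x (min (f x la) (f x lb))).ordConnected).out
          ⟨hlaI, min_le_left _ _⟩ ⟨hlbI, min_le_right _ _⟩ ⟨hla.le, hlb.le⟩
      exact hmem.2
    have : r < f x mu0 := lt_of_lt_of_le (lt_min hfa hfb) hmin
    exact absurd hxs (not_lt.2 this.le)
  -- pairwise intersection
  have hpair : ∀ x1 x2, (Λ x1 ∩ Λ x2).Nonempty := by
    intro x1 x2
    by_contra hemp
    have hdisj : ∀ lam, ¬(lam ∈ Λ x1 ∧ lam ∈ Λ x2) := by
      intro lam hlam
      exact hemp ⟨lam, hlam.1, hlam.2⟩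
    obtain ⟨lam1, h1I, hf1⟩ := h1 x1
    obtain ⟨lam2, h2I, hf2⟩ := h1 x2
    rcases lt_trichotomy lam1 lam2 with h | h | h
    · exact key x1 x2 lam1 lam2 h1I h2I hf1 hf2 h hdisj
    · exact hdisj lam2 ⟨h ▸ (⟨h1I, hf1.le⟩ : lam1 ∈ Λ x1), ⟨h2I, hf2.le⟩⟩
    · exact key x2 x1 lam2 lam1 h2I h1I hf2 hf1 h
        (fun lam hlam => hdisj lam ⟨hlam.2, hlam.1⟩)
  -- finite intersection property via Helly in dimension 1
  have hint : (Icc a b ∩ ⋂ x, Λ x).Nonempty := by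
    by_contra hemp
    rw [not_nonempty_iff_eq_empty] at hemp
    obtain ⟨u, hu⟩ := isCompact_Icc.elim_finite_subfamily_closed Λ hclosed hemp
    rcases u.eq_empty_or_nonempty with hu0 | hune
    · rw [hu0] at hu
      simp only [Finset.notMem_empty, iInter_of_empty, iInter_univ, inter_univ] at hu
      exact absurd hu (nonempty_iff_ne_empty.1 hIne)
    · obtain ⟨x0, hx0u, hmax⟩ := u.exists_max_image (fun x => sInf (Λ x)) hune
      have hx0mem : sInf (Λ x0) ∈ Λ x0 := (hcomp x0).sInf_mem (hne x0)
      have hmem : sInf (Λ x0) ∈ Icc a b ∩ ⋂ x ∈ u, Λ x := by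
        refine ⟨hsub x0 hx0mem, ?_⟩
        simp only [mem_iInter]
        intro x hxu
        obtain ⟨p, hp1, hp2⟩ := hpair x x0
        have hle : sInf (Λ x0) ≤ p := csInf_le (hcomp x0).bddBelow hp2
        have hxmem : sInf (Λ x) ∈ Λ x := (hcomp x).sInf_mem (hne x)
        exact ((hconv x).ordConnected).out hxmem hp1 ⟨hmax x hxu, hle⟩
      rw [hu] at hmem
      exact hmem
  obtain ⟨lam0, hlam0I, hlam0⟩ := hint
  have hfinal : (r : EReal) ≤ ⨆ lam : Icc a b, ⨅ x : X, (f x lam : EReal) := by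
    refine le_trans ?_ (le_iSup _ (⟨lam0, hlam0I⟩ : Icc a b))
    refine le_iInf fun x => ?_
    have : r ≤ f x lam0 := (mem_iInter.1 hlam0 x).2
    exact_mod_cast this
  exact absurd (lt_of_le_of_lt hfinal hr1) (lt_irrefl _)
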